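/- For each integer d ≥ 3, let λ*_{sph,d} be the supremum of all λ ≥ 0 such that (λ²/2) · t^d/(1+t^d) ≤ −(1/2) log(1−t²) for all t ∈ [0,1). Then as d → ∞, (λ*_{sph,d})² = 2 log d + 2 log log d + 2 − 4 log 2 + o(1); that is, (λ*_{sph,d})² − (2 log d + 2 log log d + 2 − 4 log 2) → 0. -/

import Mathlib

open Filter

noncomputable section

/-- The spherical-prior lower-bound threshold `λ*_{sph,d}`: the supremum of all `λ ≥ 0`
such that `(λ²/2) t^d/(1+t^d) ≤ -(1/2) log(1-t²)` for all `t ∈ [0,1)`. -/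
def lamSph (d : ℕ) : ℝ :=
  sSup {l : ℝ | 0 ≤ l ∧ ∀ t ∈ Set.Ico (0:ℝ) 1,
    l^2 / 2 * (t^d / (1 + t^d)) ≤ -(1/2) * Real.log (1 - t^2)}

namespace LamSphAux

def g (d : ℕ) (t : ℝ) : ℝ := (-Real.log (1 - t^2)) * (1 + t^d) / t^d

def M (d : ℕ) : ℝ := sInf (g d '' Set.Ioo 0 1)

lemma g_nonneg {d : ℕ} {t : ℝ} (ht : t ∈ Set.Ioo (0:ℝ) 1) : 0 ≤ g d t := by
  obtain ⟨h0, h1⟩ := ht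
  have h3 : Real.log (1 - t^2) ≤ 0 := Real.log_nonpos (by nlinarith) (by nlinarith)
  have h4 : (0:ℝ) < t^d := pow_pos h0 d
  exact div_nonneg (mul_nonneg (by linarith) (by positivity)) h4.le

lemma img_nonempty (d : ℕ) : (g d '' Set.Ioo 0 1).Nonempty :=
  ⟨g d (1/2), ⟨1/2, by norm_num, rfl⟩⟩

lemma img_bddBelow (d : ℕ) : BddBelow (g d '' Set.Ioo 0 1) := by
  refine ⟨0, ?_⟩
  rintro y ⟨t, ht, rfl⟩
  exact g_nonneg ht

lemma M_nonneg (d : ℕ) : 0 ≤ M d := by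
  refine le_csInf (img_nonempty d) ?_
  rintro y ⟨t, ht, rfl⟩
  exact g_nonneg ht

lemma key {l h u : ℝ} (hu : 0 < u) :
    (l^2/2 * (u/(1+u)) ≤ -(1/2) * h) ↔ l^2 ≤ (-h)*(1+u)/u := by
  have h1 : (0:ℝ) < 1 + u := by linarith
  rw [div_mul_div_comm, le_div_iff₀ hu, div_le_iff₀ (by positivity)]
  constructor <;> intro H <;> nlinarith

lemma mem_iff {d : ℕ} (hd : 1 ≤ d) {l : ℝ} (hl : 0 ≤ l) :
    (∀ t ∈ Set.Ico (0:ℝ) 1, l^2 / 2 * (t^d / (1 + t^d)) ≤ -(1/2) * Real.log (1 - t^2))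
      ↔ l^2 ≤ M d := by
  constructor
  · intro P
    refine le_csInf (img_nonempty d) ?_
    rintro y ⟨t, ht, rfl⟩
    have := P t (Set.mem_Ico.mpr ⟨ht.1.le, ht.2⟩)
    have h4 : (0:ℝ) < t^d := pow_pos ht.1 d
    exact (key h4).mp this
  · intro hM t ht
    obtain ⟨ht0, ht1⟩ := ht
    rcases eq_or_lt_of_le ht0 with h | h
    · subst h
      simp [zero_pow (by omega : d ≠ 0)]
    · have h4 : (0:ℝ) < t^d := pow_pos h d
      exact (key h4).mpr (le_trans hM (csInf_le (img_bddBelow d) ⟨t, ⟨h, ht1⟩, rfl⟩))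

lemma lamSph_sq {d : ℕ} (hd : 1 ≤ d) : (lamSph d)^2 = M d := by
  have hset : {l : ℝ | 0 ≤ l ∧ ∀ t ∈ Set.Ico (0:ℝ) 1,
      l^2 / 2 * (t^d / (1 + t^d)) ≤ -(1/2) * Real.log (1 - t^2)}
      = Set.Icc 0 (Real.sqrt (M d)) := by
    ext l
    simp only [Set.mem_setOf_eq, Set.mem_Icc]
    constructor
    · rintro ⟨hl, hP⟩
      exact ⟨hl, (Real.le_sqrt hl (M_nonneg d)).mpr ((mem_iff hd hl).mp hP)⟩
    · rintro ⟨hl, hls⟩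
      exact ⟨hl, (mem_iff hd hl).mpr ((Real.le_sqrt hl (M_nonneg d)).mp hls)⟩
  rw [lamSph, hset, csSup_Icc (Real.sqrt_nonneg _), Real.sq_sqrt (M_nonneg d)]


lemma g_eq {d : ℕ} {t : ℝ} (ht : t ∈ Set.Ioo (0:ℝ) 1) :
    g d t = (-Real.log (1 - t^2)) * (1 + Real.exp (-((d:ℝ) * Real.log t))) := by
  have h0 := ht.1
  have hu : t^d = Real.exp ((d:ℝ) * Real.log t) := by
    rw [Real.exp_nat_mul, Real.exp_log h0]
  rw [g, hu, mul_div_assoc, add_div, div_self (Real.exp_ne_zero _), Real.exp_neg]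
  ring

-- log L ≤ L/2 - 2 for L ≥ 16
lemma log_le_half {L : ℝ} (hL : 16 ≤ L) : Real.log L ≤ L/2 - 2 := by
  have h1 : Real.log L = 2 * Real.log (Real.sqrt L) := by
    rw [Real.log_sqrt (by linarith)]; ring
  have h2 : Real.log (Real.sqrt L) ≤ Real.sqrt L - 1 :=
    Real.log_le_sub_one_of_pos (Real.sqrt_pos.mpr (by linarith))
  have h3 : Real.sqrt L ≤ L/4 := by
    have : L ≤ (L/4)^2 := by nlinarith
    calc Real.sqrt L ≤ Real.sqrt ((L/4)^2) := Real.sqrt_le_sqrt this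
    _ = L/4 := Real.sqrt_sq (by linarith)
  linarith

set_option maxHeartbeats 1000000 in
lemma lower_bound {d : ℕ} (hL : 60 ≤ Real.log d) :
    ∀ t ∈ Set.Ioo (0:ℝ) 1,
      2*((Real.log d - 2*Real.log 2) + 1 + Real.log (Real.log d - 2*Real.log 2)) ≤ g d t := by
  set L := Real.log d with hLdef
  have hl2a : (0:ℝ) ≤ Real.log 2 := Real.log_nonneg (by norm_num)
  have hl2b : Real.log 2 ≤ 1 := by
    have := Real.log_le_sub_one_of_pos (by norm_num : (0:ℝ) < 2); linarith
  set B := L - 2*Real.log 2 with hBdef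
  have hB : 58 ≤ B := by rw [hBdef]; linarith
  have hd0 : 0 < d := by
    by_contra h
    push_neg at h
    interval_cases d
    simp [hLdef] at hL; norm_num at hL
  have hd3 : (3:ℝ) ≤ (d:ℝ) := by
    have : Real.exp L = d := Real.exp_log (by exact_mod_cast hd0)
    have h2 : (60:ℝ) + 1 ≤ Real.exp L := le_trans (by linarith) (Real.add_one_le_exp L)
    linarith
  have hdpos : (0:ℝ) < (d:ℝ) := by linarith
  intro t ht
  obtain ⟨h0, h1⟩ := ht
  have hlt : Real.log t < 0 := Real.log_neg h0 h1
  set v := -((d:ℝ) * Real.log t) with hvdef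
  have hv : 0 < v := by
    rw [hvdef]; nlinarith
  have h1t2 : (0:ℝ) < 1 - t^2 := by nlinarith
  set h := -Real.log (1 - t^2) with hhdef
  have hh0 : 0 ≤ h := by
    rw [hhdef]
    have := Real.log_nonpos (by nlinarith) (by nlinarith : 1 - t^2 ≤ 1)
    linarith
  have hg : g d t = h * (1 + Real.exp v) := g_eq ⟨h0, h1⟩
  -- core: L - log 2 - log v ≤ h
  have hcore : L - Real.log 2 - Real.log v ≤ h := by
    have hb1 : 1 - t ≤ -Real.log t := by
      have := Real.log_le_sub_one_of_pos h0; linarith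
    have hb2 : 1 - t^2 ≤ 2*(v/(d:ℝ)) := by
      have hvd : v/(d:ℝ) = -Real.log t := by
        rw [hvdef]; field_simp
      rw [hvd]; nlinarith
    have hb3 : Real.log (1 - t^2) ≤ Real.log (2*(v/(d:ℝ))) :=
      (Real.log_le_log_iff h1t2 (by positivity)).mpr hb2
    have hb4 : Real.log (2*(v/(d:ℝ))) = Real.log 2 + Real.log v - L := by
      rw [Real.log_mul (by norm_num) (by positivity), Real.log_div (by positivity) (by positivity)]
      ring
    rw [hhdef]; rw [hb4] at hb3; linarith
  rcases le_total v 2 with hv2 | hv2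
  · -- Range A: v ≤ 2
    set s := v/2 with hsdef
    have hs0 : 0 < s := by positivity
    have hs1 : s ≤ 1 := by rw [hsdef]; linarith
    have hlogs : Real.log s ≤ 0 := Real.log_nonpos hs0.le hs1
    have hA1 : Real.log v = Real.log 2 + Real.log s := by
      rw [show v = 2*s by rw [hsdef]; ring, Real.log_mul (by norm_num) (by positivity)]
    have hcore' : B - Real.log s ≤ h := by rw [hBdef]; rw [hA1] at hcore; linarith
    have hA3 : 2 + v ≤ 1 + Real.exp v := by
      have := Real.add_one_le_exp v; linarith
    have hprod : (B - Real.log s) * (2 + v) ≤ h * (1 + Real.exp v) :=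
      mul_le_mul hcore' hA3 (by linarith) hh0
    have f1 : 1 + (Real.log s + Real.log B) ≤ s * B := by
      have := Real.log_le_sub_one_of_pos (show (0:ℝ) < s*B by positivity)
      rw [Real.log_mul (ne_of_gt hs0) (by positivity)] at this
      linarith
    have f2 : s * Real.log s ≤ 0 := mul_nonpos_of_nonneg_of_nonpos hs0.le hlogs
    have expand : (B - Real.log s) * (2 + v)
        = 2*B + 2*(s*B) - 2*Real.log s - 2*(s*Real.log s) := by
      rw [show v = 2*s by rw [hsdef]; ring]; ring
    rw [hg]
    calc 2*(B + 1 + Real.log B) ≤ (B - Real.log s) * (2 + v) := by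
          rw [expand]; linarith
    _ ≤ h * (1 + Real.exp v) := hprod
  · rcases le_total v L with hvL | hvL
    · -- Range B: 2 ≤ v ≤ L
      have hlogv : Real.log v ≤ Real.log L := (Real.log_le_log_iff hv (by linarith)).mpr hvL
      have hlogL : Real.log L ≤ L/2 - 2 := log_le_half (by linarith)
      have hX0 : 0 ≤ L - Real.log 2 - Real.log L := by linarith
      have he2 : 7 ≤ Real.exp 2 := by
        have h9 := Real.exp_one_gt_d9
        have : Real.exp 2 = Real.exp 1 * Real.exp 1 := by
          rw [← Real.exp_add]; norm_num
        nlinarith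
      have hstep1 : (L - Real.log 2 - Real.log L) * (1 + Real.exp 2)
          ≤ h * (1 + Real.exp v) := by
        refine mul_le_mul (by linarith) ?_ (by linarith) hh0
        have := Real.exp_le_exp.mpr hv2
        linarith
      have hlogB : Real.log B ≤ Real.log L := (Real.log_le_log_iff (by linarith) (by linarith)).mpr (by linarith)
      have hnum : 2*(B + 1 + Real.log B) ≤ (L - Real.log 2 - Real.log L) * (1 + Real.exp 2) := by
        have hX : L/2 + 1 ≤ L - Real.log 2 - Real.log L := by linarith
        have h8 : (8:ℝ) ≤ 1 + Real.exp 2 := by linarith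
        have key : (L/2 + 1) * 8 ≤ (L - Real.log 2 - Real.log L) * (1 + Real.exp 2) :=
          mul_le_mul hX h8 (by norm_num) (by linarith)
        linarith
      rw [hg]; linarith
    · -- Range C: L ≤ v
      have hC1 : t^2 ≤ h := by
        have := Real.log_le_sub_one_of_pos h1t2
        rw [hhdef]; nlinarith
      have ht2 : t^2 = Real.exp (-(2*v/(d:ℝ))) := by
        have : t^2 = Real.exp (Real.log (t^2)) := (Real.exp_log (by positivity)).symm
        rw [this, Real.log_pow]
        congr 1
        rw [hvdef]; push_cast; field_simp
      have hstep : Real.exp (v/3) ≤ h * (1 + Real.exp v) := by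
        have e1 : Real.exp (-(2*v/(d:ℝ))) * Real.exp v = Real.exp (v - 2*v/(d:ℝ)) := by
          rw [← Real.exp_add]; ring_nf
        have e2 : v/3 ≤ v - 2*v/(d:ℝ) := by
          have h2d : 2/(d:ℝ) ≤ 2/3 := by
            rw [div_le_div_iff₀ hdpos (by norm_num)]; linarith
          have he : 2*v/(d:ℝ) = (2/(d:ℝ))*v := by ring
          rw [he]
          have := mul_le_mul_of_nonneg_right h2d hv.le
          linarith
        calc Real.exp (v/3) ≤ Real.exp (v - 2*v/(d:ℝ)) := Real.exp_le_exp.mpr e2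
        _ = t^2 * Real.exp v := by rw [← e1, ht2]
        _ ≤ h * (1 + Real.exp v) := by
            refine mul_le_mul hC1 (by linarith [Real.exp_pos v]) (Real.exp_pos v).le hh0
      have hlogB : Real.log B ≤ B - 1 := by
        have := Real.log_le_sub_one_of_pos (show (0:ℝ) < B by linarith); linarith
      have hnum : 2*(B + 1 + Real.log B) ≤ Real.exp (L/3) := by
        have h4L : 2*(B + 1 + Real.log B) ≤ 4*L := by
          have : B ≤ L := by rw [hBdef]; linarith
          linarith
        have hexp : (1 + L/9)^3 ≤ Real.exp (L/3) := by
          have e3 : Real.exp (L/3) = Real.exp (L/9) ^ 3 := by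
            rw [← Real.exp_nat_mul]; congr 1; push_cast; ring
          have hae := Real.add_one_le_exp (L/9)
          rw [e3]
          have h19 : (0:ℝ) ≤ 1 + L/9 := by linarith
          exact pow_le_pow_left₀ h19 (by linarith) 3
        have hL2 : 3600 ≤ L^2 := by nlinarith
        have hL3 : 3600*L ≤ L^3 := by nlinarith
        have hcube : 4*L ≤ (1 + L/9)^3 := by nlinarith
        linarith
      have hmono : Real.exp (L/3) ≤ Real.exp (v/3) := Real.exp_le_exp.mpr (by linarith)
      rw [hg]
      exact le_trans hnum (le_trans hmono hstep)

def Lf (d : ℕ) : ℝ := Real.log d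
def sf (d : ℕ) : ℝ := 2/((d:ℝ) * Lf d)
def rf (d : ℕ) : ℝ := -((d:ℝ) * Real.log (1 - sf d))
def hf (d : ℕ) : ℝ := -Real.log (1 - (1 - sf d)^2)

lemma d_ge_one {d : ℕ} (hL : 60 ≤ Real.log d) : (1:ℝ) ≤ (d:ℝ) := by
  rcases Nat.eq_zero_or_pos d with h | h
  · subst h; simp [Real.log_zero] at hL; linarith
  · exact_mod_cast h

-- basic facts under 60 ≤ log d
lemma s_facts {d : ℕ} (hL : 60 ≤ Real.log d) :
    0 < sf d ∧ sf d ≤ 1/30 ∧ (0:ℝ) < (d:ℝ) ∧ (0:ℝ) < Lf d := by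
  have hd1 := d_ge_one hL
  have hdpos : (0:ℝ) < (d:ℝ) := by linarith
  have hLpos : (0:ℝ) < Lf d := by rw [Lf]; linarith
  have hdL : 60 ≤ (d:ℝ) * Lf d := by
    have : (1:ℝ) * Lf d ≤ (d:ℝ) * Lf d := by
      apply mul_le_mul_of_nonneg_right hd1 hLpos.le
    rw [Lf] at *; nlinarith
  refine ⟨by rw [sf]; positivity, ?_, hdpos, hLpos⟩
  rw [sf, div_le_div_iff₀ (by nlinarith) (by norm_num)]
  linarith

lemma tL : Tendsto Lf atTop atTop :=
  Real.tendsto_log_atTop.comp tendsto_natCast_atTop_atTop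

lemma E60 : ∀ᶠ d : ℕ in atTop, 60 ≤ Real.log d := tL.eventually_ge_atTop 60

lemma tdL : Tendsto (fun d : ℕ => (d:ℝ) * Lf d) atTop atTop :=
  tendsto_natCast_atTop_atTop.atTop_mul_atTop₀ tL

lemma ts : Tendsto sf atTop (nhds 0) :=
  tendsto_const_nhds.div_atTop tdL

lemma tc : Tendsto (fun d : ℕ => Real.log (2 - sf d)) atTop (nhds (Real.log 2)) := by
  have h2 : Tendsto (fun d : ℕ => 2 - sf d) atTop (nhds 2) := by
    simpa using tendsto_const_nhds.sub ts
  exact ((Real.continuousAt_log (by norm_num)).tendsto).comp h2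

lemma hf_eq {d : ℕ} (hL : 60 ≤ Real.log d) :
    hf d = Lf d + Real.log (Lf d) - Real.log 2 - Real.log (2 - sf d) := by
  obtain ⟨hs0, hs1, hdpos, hLpos⟩ := s_facts hL
  have h1 : 1 - (1 - sf d)^2 = sf d * (2 - sf d) := by ring
  have h2 : Real.log (sf d * (2 - sf d)) = Real.log (sf d) + Real.log (2 - sf d) :=
    Real.log_mul (ne_of_gt hs0) (by linarith)
  have h3 : Real.log (sf d) = Real.log 2 - (Real.log d + Real.log (Lf d)) := by
    rw [sf, Real.log_div (by norm_num) (by positivity), Real.log_mul (ne_of_gt hdpos) (ne_of_gt hLpos)]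
  rw [hf, h1, h2, h3, Lf]
  ring

lemma th_div_L : Tendsto (fun d : ℕ => hf d / Lf d) atTop (nhds 1) := by
  have t1 : Tendsto (fun d : ℕ => Real.log (Lf d) / Lf d) atTop (nhds 0) :=
    Real.isLittleO_log_id_atTop.tendsto_div_nhds_zero.comp tL
  have t2 : Tendsto (fun d : ℕ => Real.log 2 / Lf d) atTop (nhds 0) :=
    tendsto_const_nhds.div_atTop tL
  have t3 : Tendsto (fun d : ℕ => Real.log (2 - sf d) / Lf d) atTop (nhds 0) :=
    tc.div_atTop tL
  have tsum : Tendsto (fun d : ℕ =>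
      1 + Real.log (Lf d) / Lf d - Real.log 2 / Lf d - Real.log (2 - sf d) / Lf d)
      atTop (nhds 1) := by
    have := (((tendsto_const_nhds (x := (1:ℝ))).add t1).sub t2).sub t3
    simpa using this
  apply tsum.congr'
  filter_upwards [E60] with d hL
  obtain ⟨hs0, hs1, hdpos, hLpos⟩ := s_facts hL
  rw [hf_eq hL]
  field_simp

lemma tLr : Tendsto (fun d : ℕ => Lf d * rf d) atTop (nhds 2) := by
  have tup : Tendsto (fun d : ℕ => 2 / (1 - sf d)) atTop (nhds 2) := by
    have h2 : Tendsto (fun d : ℕ => 1 - sf d) atTop (nhds 1) := by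
      simpa using tendsto_const_nhds.sub ts
    have := (tendsto_const_nhds (x := (2:ℝ))).div h2 (by norm_num : (1:ℝ) ≠ 0)
    rw [div_one] at this; exact this
  apply tendsto_of_tendsto_of_tendsto_of_le_of_le' (tendsto_const_nhds (x := (2:ℝ))) tup
  · filter_upwards [E60] with d hL
    obtain ⟨hs0, hs1, hdpos, hLpos⟩ := s_facts hL
    have hlog : Real.log (1 - sf d) ≤ -sf d := by
      have := Real.log_le_sub_one_of_pos (show (0:ℝ) < 1 - sf d by linarith)
      linarith
    have hr : (d:ℝ) * sf d ≤ rf d := by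
      rw [rf]; nlinarith
    have hds : (d:ℝ) * sf d = 2 / Lf d := by
      rw [sf]; field_simp
    have : 2 / Lf d * Lf d = 2 := by field_simp
    nlinarith
  · filter_upwards [E60] with d hL
    obtain ⟨hs0, hs1, hdpos, hLpos⟩ := s_facts hL
    have hs' : (0:ℝ) < 1 - sf d := by linarith
    have hlog : -Real.log (1 - sf d) ≤ sf d / (1 - sf d) := by
      have h1 : Real.log ((1 - sf d)⁻¹) ≤ (1 - sf d)⁻¹ - 1 :=
        Real.log_le_sub_one_of_pos (by positivity)
      rw [Real.log_inv] at h1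
      have h2 : (1 - sf d)⁻¹ - 1 = sf d / (1 - sf d) := by field_simp; ring
      linarith [h2 ▸ h1]
    have hr : rf d ≤ (d:ℝ) * (sf d / (1 - sf d)) := by
      rw [rf]; nlinarith
    have hds : (d:ℝ) * sf d = 2 / Lf d := by
      rw [sf]; field_simp
    have key : Lf d * rf d ≤ Lf d * ((d:ℝ) * (sf d / (1 - sf d))) :=
      mul_le_mul_of_nonneg_left hr hLpos.le
    have e : Lf d * ((d:ℝ) * (sf d / (1 - sf d))) = ((d:ℝ) * sf d) * Lf d / (1 - sf d) := by
      ring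
    rw [e, hds] at key
    have e2 : 2 / Lf d * Lf d / (1 - sf d) = 2 / (1 - sf d) := by field_simp
    linarith [e2 ▸ key]

lemma tr : Tendsto rf atTop (nhds 0) := by
  have := tLr.div_atTop tL
  apply this.congr'
  filter_upwards [E60] with d hL
  obtain ⟨_, _, _, hLpos⟩ := s_facts hL
  field_simp

lemma thr : Tendsto (fun d : ℕ => hf d * rf d) atTop (nhds 2) := by
  have := th_div_L.mul tLr
  rw [one_mul] at this
  apply this.congr'
  filter_upwards [E60] with d hL
  obtain ⟨_, _, _, hLpos⟩ := s_facts hL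
  field_simp

lemma tmain : Tendsto (fun d : ℕ => hf d * (Real.exp (rf d) - 1)) atTop (nhds 2) := by
  have thru : Tendsto (fun d : ℕ => hf d * rf d / (1 - rf d)) atTop (nhds 2) := by
    have h1 : Tendsto (fun d : ℕ => 1 - rf d) atTop (nhds 1) := by
      simpa using tendsto_const_nhds.sub tr
    have := thr.div h1 (by norm_num : (1:ℝ) ≠ 0)
    rw [div_one] at this; exact this
  have hrsmall : ∀ᶠ d : ℕ in atTop, rf d < 1/2 := by
    have := tr.eventually (eventually_lt_nhds (by norm_num : (0:ℝ) < 1/2))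
    exact this
  apply tendsto_of_tendsto_of_tendsto_of_le_of_le' thr thru
  · filter_upwards [E60] with d hL
    obtain ⟨hs0, hs1, hdpos, hLpos⟩ := s_facts hL
    have hh0 : 0 ≤ hf d := by
      rw [hf]
      have h1 : (0:ℝ) < 1 - sf d := by linarith
      have := Real.log_nonpos (by nlinarith) (by nlinarith : 1 - (1 - sf d)^2 ≤ 1)
      linarith
    have := Real.add_one_le_exp (rf d)
    nlinarith
  · filter_upwards [E60, hrsmall] with d hL hr2
    obtain ⟨hs0, hs1, hdpos, hLpos⟩ := s_facts hL
    have hh0 : 0 ≤ hf d := by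
      rw [hf]
      have h1 : (0:ℝ) < 1 - sf d := by linarith
      have := Real.log_nonpos (by nlinarith) (by nlinarith : 1 - (1 - sf d)^2 ≤ 1)
      linarith
    have hr0 : 0 ≤ rf d := by
      rw [rf]
      have h1 : (0:ℝ) < 1 - sf d := by linarith
      have := Real.log_nonpos h1.le (by linarith)
      nlinarith
    have hexp : Real.exp (rf d) - 1 ≤ rf d / (1 - rf d) := by
      have hpos : (0:ℝ) < 1 - rf d := by linarith
      have h1 : 1 - rf d ≤ (Real.exp (rf d))⁻¹ := by
        have := Real.add_one_le_exp (-(rf d)); rw [Real.exp_neg] at this; linarith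
      have h2 : Real.exp (rf d) ≤ 1/(1 - rf d) := by
        rw [le_div_iff₀ hpos]
        calc Real.exp (rf d) * (1 - rf d) ≤ Real.exp (rf d) * (Real.exp (rf d))⁻¹ :=
              mul_le_mul_of_nonneg_left h1 (Real.exp_pos _).le
        _ = 1 := mul_inv_cancel₀ (Real.exp_ne_zero _)
      have h3 : 1/(1 - rf d) - 1 = rf d / (1 - rf d) := by field_simp; ring
      linarith
    calc hf d * (Real.exp (rf d) - 1) ≤ hf d * (rf d / (1 - rf d)) :=
          mul_le_mul_of_nonneg_left hexp hh0
    _ = hf d * rf d / (1 - rf d) := by ring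


lemma tU2 : Tendsto (fun d : ℕ => g d (1 - sf d)
    - (2*Real.log d + 2*Real.log (Real.log d) + 2 - 4*Real.log 2)) atTop (nhds 0) := by
  have t1 : Tendsto (fun d : ℕ => Real.log 2 - Real.log (2 - sf d)) atTop (nhds 0) := by
    simpa using (tendsto_const_nhds (x := Real.log 2)).sub tc
  have t2 := tmain.sub (tendsto_const_nhds (x := (2:ℝ)))
  have hsum := ((tendsto_const_nhds (x := (2:ℝ))).mul t1).add t2
  rw [mul_zero, sub_self, add_zero] at hsum
  apply hsum.congr'
  filter_upwards [E60] with d hL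
  obtain ⟨hs0, hs1, hdpos, hLpos⟩ := s_facts hL
  have htm : (1 - sf d) ∈ Set.Ioo (0:ℝ) 1 := ⟨by linarith, by linarith⟩
  have hg : g d (1 - sf d) = hf d * (1 + Real.exp (rf d)) := by
    rw [g_eq htm, hf, rf]
  rw [hg, hf_eq hL]
  simp only [Lf]
  ring

lemma tA : Tendsto (fun d : ℕ =>
    2*((Real.log d - 2*Real.log 2) + 1 + Real.log (Real.log d - 2*Real.log 2))
    - (2*Real.log d + 2*Real.log (Real.log d) + 2 - 4*Real.log 2)) atTop (nhds 0) := by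
  have t1 : Tendsto (fun d : ℕ => 1 - 2*Real.log 2 / Lf d) atTop (nhds 1) := by
    simpa using (tendsto_const_nhds (x := (1:ℝ))).sub
      ((tendsto_const_nhds (x := 2*Real.log 2)).div_atTop tL)
  have t2 : Tendsto (fun d : ℕ => Real.log (1 - 2*Real.log 2 / Lf d)) atTop (nhds 0) := by
    have := ((Real.continuousAt_log (by norm_num : (1:ℝ) ≠ 0)).tendsto).comp t1
    rw [Real.log_one] at this; exact this
  have t3 := (tendsto_const_nhds (x := (2:ℝ))).mul t2
  rw [mul_zero] at t3
  apply t3.congr'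
  filter_upwards [E60] with d hL
  have hl2a : (0:ℝ) ≤ Real.log 2 := Real.log_nonneg (by norm_num)
  have hl2b : Real.log 2 ≤ 1 := by
    have := Real.log_le_sub_one_of_pos (by norm_num : (0:ℝ) < 2); linarith
  have hLpos : (0:ℝ) < Real.log d := by linarith
  have hBpos : (0:ℝ) < Real.log d - 2*Real.log 2 := by linarith
  have he : 1 - 2*Real.log 2 / Lf d = (Real.log d - 2*Real.log 2) / Real.log d := by
    rw [Lf]; field_simp
  rw [he, Real.log_div (ne_of_gt hBpos) (ne_of_gt hLpos)]
  ring

end LamSphAux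

open LamSphAux in
/-- **Asymptotics of the spherical lower-bound threshold.** As `d → ∞`,
`(λ*_{sph,d})² = 2 log d + 2 log log d + 2 - 4 log 2 + o(1)`. -/
theorem lamSph_asymptotics :
    Tendsto (fun d : ℕ =>
        (lamSph d)^2 - (2 * Real.log d + 2 * Real.log (Real.log d) + 2 - 4 * Real.log 2))
      atTop (nhds 0) := by
  apply tendsto_of_tendsto_of_tendsto_of_le_of_le' tA tU2 ?_ ?_
  · filter_upwards [E60] with d hL
    have hd1 : 1 ≤ d := by
      have := d_ge_one hL; exact_mod_cast this
    rw [lamSph_sq hd1]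
    have hlow : 2*((Real.log d - 2*Real.log 2) + 1 + Real.log (Real.log d - 2*Real.log 2))
        ≤ M d := by
      refine le_csInf (img_nonempty d) ?_
      rintro y ⟨t, ht, rfl⟩
      exact lower_bound hL t ht
    linarith
  · filter_upwards [E60] with d hL
    have hd1 : 1 ≤ d := by
      have := d_ge_one hL; exact_mod_cast this
    rw [lamSph_sq hd1]
    obtain ⟨hs0, hs1, hdpos, hLpos⟩ := s_facts hL
    have htm : (1 - sf d) ∈ Set.Ioo (0:ℝ) 1 := ⟨by linarith, by linarith⟩
    have hupp : M d ≤ g d (1 - sf d) :=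
      csInf_le (img_bddBelow d) ⟨_, htm, rfl⟩
    linarith

end
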